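/- With the DPnP kernel definitions, the distribution π_η(x) = p⋆(x) q̃_η(x) / ∫ p⋆ q̃_η is a well-defined probability density (the normalizing integral is finite and positive), and K_DPnP is reversible with respect to π_η: for all x, x' ∈ ℝ^d, π_η(x) K_DPnP(x, x') = π_η(x') K_DPnP(x', x). Consequently π_η is a stationary distribution of K_DPnP: ∫ π_η(x) K_DPnP(x, x') dx = π_η(x') for every x'. -/

import Mathlib

open MeasureTheory Real

set_option maxHeartbeats 1000000

/-- `q̃_η(x) = ∫ e^{L(x')} e^{−‖x−x'‖²/(2η²)} dx'`. -/
noncomputable def qEta {d : ℕ} (L : EuclideanSpace ℝ (Fin d) → ℝ) (η : ℝ)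
    (x : EuclideanSpace ℝ (Fin d)) : ℝ :=
  ∫ x', Real.exp (L x') * Real.exp (-‖x - x'‖ ^ 2 / (2 * η ^ 2))

/-- `p̃_η(x) = ∫ p⋆(x') e^{−‖x−x'‖²/(2η²)} dx'`. -/
noncomputable def pEta {d : ℕ} (p : EuclideanSpace ℝ (Fin d) → ℝ) (η : ℝ)
    (x : EuclideanSpace ℝ (Fin d)) : ℝ :=
  ∫ x', p x' * Real.exp (-‖x - x'‖ ^ 2 / (2 * η ^ 2))

/-- The proximal consistency sampler kernel
`K_PCS(x, x') = e^{L(x') − ‖x'−x‖²/(2η²)} / q̃_η(x)`. -/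
noncomputable def KPCS {d : ℕ} (L : EuclideanSpace ℝ (Fin d) → ℝ) (η : ℝ)
    (x x' : EuclideanSpace ℝ (Fin d)) : ℝ :=
  Real.exp (L x' - ‖x' - x‖ ^ 2 / (2 * η ^ 2)) / qEta L η x

/-- The denoising diffusion sampler kernel
`K_DDS(x, x') = p⋆(x') e^{−‖x'−x‖²/(2η²)} / p̃_η(x)`. -/
noncomputable def KDDS {d : ℕ} (p : EuclideanSpace ℝ (Fin d) → ℝ) (η : ℝ)
    (x x' : EuclideanSpace ℝ (Fin d)) : ℝ :=
  p x' * Real.exp (-‖x' - x‖ ^ 2 / (2 * η ^ 2)) / pEta p η x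

/-- The composite DPnP kernel `K_DPnP(x, x') = ∫ K_PCS(x, z) K_DDS(z, x') dz`. -/
noncomputable def KDPnP {d : ℕ} (p L : EuclideanSpace ℝ (Fin d) → ℝ) (η : ℝ)
    (x x' : EuclideanSpace ℝ (Fin d)) : ℝ :=
  ∫ z, KPCS L η x z * KDDS p η z x'

/-- Action of a Markov transition density on a probability density:
`(p ∘ K)(x') = ∫ p(x) K(x, x') dx`. -/
noncomputable def applyKernel {d : ℕ} (K : EuclideanSpace ℝ (Fin d) → EuclideanSpace ℝ (Fin d) → ℝ)
    (p : EuclideanSpace ℝ (Fin d) → ℝ) : EuclideanSpace ℝ (Fin d) → ℝ :=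
  fun x' => ∫ x, p x * K x x'

/-- Total variation distance between two densities: `TV(p, q) = ∫ |p(x) − q(x)| dx`. -/
noncomputable def tvDist {d : ℕ} (p q : EuclideanSpace ℝ (Fin d) → ℝ) : ℝ :=
  ∫ x, |p x - q x|

/-- Chi-squared divergence: `χ²(p ‖ q) = ∫ (p(x) − q(x))² / q(x) dx`. -/
noncomputable def chiSq {d : ℕ} (p q : EuclideanSpace ℝ (Fin d) → ℝ) : ℝ :=
  ∫ x, (p x - q x) ^ 2 / q x

/-- The stationary density `π_η(x) = p⋆(x) q̃_η(x) / ∫ p⋆ q̃_η`. -/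
noncomputable def piEta {d : ℕ} (p L : EuclideanSpace ℝ (Fin d) → ℝ) (η : ℝ)
    (x : EuclideanSpace ℝ (Fin d)) : ℝ :=
  p x * qEta L η x / ∫ y, p y * qEta L η y

namespace DPnPAux

variable {d : ℕ}

local notation "E" => EuclideanSpace ℝ (Fin d)

theorem gauss_int0 (b : ℝ) (hb : 0 < b) :
    Integrable (fun v : E => rexp (-b * ‖v‖ ^ 2)) := by
  have h := (GaussianFourier.integrable_cexp_neg_mul_sq_norm_add (V := E) (b := (b : ℂ))
    (by simpa using hb) 0 0).norm
  simpa only [Complex.norm_exp, zero_mul, add_zero, Complex.neg_re,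
    Complex.mul_re, ← Complex.ofReal_pow, Complex.ofReal_re, Complex.ofReal_im, Complex.neg_im,
    mul_zero, sub_zero, neg_mul, neg_zero] using h

theorem gauss_int {η : ℝ} (hη : 0 < η) (x : E) :
    Integrable (fun z : E => rexp (-‖x - z‖ ^ 2 / (2 * η ^ 2))) := by
  have hb : (0:ℝ) < 1 / (2 * η ^ 2) := by positivity
  have hfe : (fun v : E => rexp (-(1 / (2 * η ^ 2)) * ‖v‖ ^ 2))
      = fun v : E => rexp (-‖v‖ ^ 2 / (2 * η ^ 2)) := by
    funext v
    rw [show -(1 / (2 * η ^ 2)) * ‖v‖ ^ 2 = -‖v‖ ^ 2 / (2 * η ^ 2) by ring]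
  exact (hfe ▸ gauss_int0 _ hb).comp_sub_left x

theorem gauss_nonneg {η : ℝ} (x z : E) : (0:ℝ) ≤ rexp (-‖x - z‖ ^ 2 / (2 * η ^ 2)) :=
  (Real.exp_pos _).le

theorem gauss_le_one {η : ℝ} (hη : 0 < η) (x z : E) :
    rexp (-‖x - z‖ ^ 2 / (2 * η ^ 2)) ≤ 1 := by
  rw [Real.exp_le_one_iff]
  have : (0:ℝ) ≤ ‖x - z‖ ^ 2 := by positivity
  have h2 : (0:ℝ) < 2 * η ^ 2 := by positivity
  rw [div_nonpos_iff]
  right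
  constructor
  · linarith
  · linarith

/-- The normalizing constant of the Gaussian. -/
noncomputable def gaussC (d : ℕ) (η : ℝ) : ℝ :=
  ∫ z : EuclideanSpace ℝ (Fin d), rexp (-‖z‖ ^ 2 / (2 * η ^ 2))

theorem gauss_integral_eq {η : ℝ} (x : E) :
    ∫ z : E, rexp (-‖x - z‖ ^ 2 / (2 * η ^ 2)) = gaussC d η := by
  rw [gaussC, ← integral_sub_left_eq_self (fun z : E => rexp (-‖z‖ ^ 2 / (2 * η ^ 2))) volume x]


theorem qEta_integrand_integrable {L : E → ℝ} {η M : ℝ} (hLm : Measurable L) (hM : ∀ y, L y ≤ M)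
    (hη : 0 < η) (x : E) :
    Integrable (fun z : E => rexp (L z) * rexp (-‖x - z‖ ^ 2 / (2 * η ^ 2))) := by
  refine Integrable.mono' ((gauss_int hη x).const_mul (rexp M))
    ((hLm.exp.mul
      (((measurable_const.sub measurable_id).norm.pow_const 2).neg.div_const _).exp).aestronglyMeasurable)
    (Filter.Eventually.of_forall fun z => ?_)
  rw [Real.norm_eq_abs, abs_of_nonneg (by positivity)]
  exact mul_le_mul_of_nonneg_right (Real.exp_le_exp.2 (hM z)) (gauss_nonneg x z)

theorem qEta_pos {L : E → ℝ} {η M : ℝ} (hLm : Measurable L) (hM : ∀ y, L y ≤ M) (hη : 0 < η) (x : E) :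
    0 < qEta L η x := by
  rw [qEta, integral_pos_iff_support_of_nonneg
    (fun z => mul_nonneg (Real.exp_pos _).le (gauss_nonneg x z))
    (qEta_integrand_integrable hLm hM hη x)]
  have : (Function.support fun z : E => rexp (L z) * rexp (-‖x - z‖ ^ 2 / (2 * η ^ 2)))
      = Set.univ := by
    ext z
    simp [Function.mem_support, (mul_pos (Real.exp_pos _) (Real.exp_pos _)).ne']
  rw [this]
  exact isOpen_univ.measure_pos volume Set.univ_nonempty

theorem qEta_nonneg (L : E → ℝ) (η : ℝ) (x : E) : 0 ≤ qEta L η x :=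
  integral_nonneg fun z => mul_nonneg (Real.exp_pos _).le (Real.exp_pos _).le

theorem qEta_le {L : E → ℝ} {η M : ℝ} (hLm : Measurable L) (hM : ∀ y, L y ≤ M) (hη : 0 < η) (x : E) :
    qEta L η x ≤ rexp M * gaussC d η := by
  rw [qEta, ← gauss_integral_eq x, ← integral_const_mul]
  refine integral_mono (qEta_integrand_integrable hLm hM hη x)
    ((gauss_int hη x).const_mul _) fun z => ?_
  exact mul_le_mul_of_nonneg_right (Real.exp_le_exp.2 (hM z)) (gauss_nonneg x z)

theorem qEta_measurable {L : E → ℝ} {η : ℝ} (hLm : Measurable L) : Measurable (qEta L η) := by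
  unfold qEta
  exact (StronglyMeasurable.integral_prod_right'
    (f := fun q => rexp (L q.2) * rexp (-‖q.1 - q.2‖ ^ 2 / (2 * η ^ 2)))
    (by exact ((hLm.comp measurable_snd).exp.mul
      (((measurable_fst.sub measurable_snd).norm.pow_const 2).neg.div_const
        (2 * η ^ 2)).exp).stronglyMeasurable)).measurable


theorem p_integrable {p : E → ℝ} (hp1 : ∫ x : E, p x = 1) : Integrable p := by
  by_contra h
  rw [integral_undef h] at hp1
  norm_num at hp1

theorem pEta_integrand_integrable {p : E → ℝ} {η : ℝ} (hp1 : ∫ x : E, p x = 1) (hpm : Measurable p)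
    (hp0 : ∀ x, 0 ≤ p x) (hη : 0 < η) (z : E) :
    Integrable (fun x : E => p x * rexp (-‖z - x‖ ^ 2 / (2 * η ^ 2))) := by
  refine Integrable.mono' (p_integrable hp1)
    ((hpm.mul
      (((measurable_const.sub measurable_id).norm.pow_const 2).neg.div_const _).exp).aestronglyMeasurable)
    (Filter.Eventually.of_forall fun x => ?_)
  rw [Real.norm_eq_abs, abs_of_nonneg (mul_nonneg (hp0 x) (gauss_nonneg z x))]
  calc p x * rexp (-‖z - x‖ ^ 2 / (2 * η ^ 2)) ≤ p x * 1 :=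
        mul_le_mul_of_nonneg_left (gauss_le_one hη z x) (hp0 x)
    _ = p x := mul_one _

theorem pEta_nonneg {p : E → ℝ} {η : ℝ} (hp0 : ∀ x, 0 ≤ p x) (z : E) : 0 ≤ pEta p η z :=
  integral_nonneg fun x => mul_nonneg (hp0 x) (Real.exp_pos _).le

theorem support_p_pos {p : E → ℝ} (hp1 : ∫ x : E, p x = 1) (hp0 : ∀ x, 0 ≤ p x) :
    0 < volume (Function.support p) := by
  rw [← integral_pos_iff_support_of_nonneg hp0 (p_integrable hp1), hp1]
  norm_num

theorem pEta_pos {p : E → ℝ} {η : ℝ} (hp1 : ∫ x : E, p x = 1) (hpm : Measurable p)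
    (hp0 : ∀ x, 0 ≤ p x) (hη : 0 < η) (z : E) : 0 < pEta p η z := by
  rw [pEta, integral_pos_iff_support_of_nonneg
    (fun x => mul_nonneg (hp0 x) (gauss_nonneg z x))
    (pEta_integrand_integrable hp1 hpm hp0 hη z)]
  refine lt_of_lt_of_le (support_p_pos hp1 hp0) (measure_mono fun x hx => ?_)
  simp only [Function.mem_support] at hx ⊢
  exact mul_ne_zero hx (Real.exp_pos _).ne'

theorem pEta_measurable {p : E → ℝ} {η : ℝ} (hpm : Measurable p) : Measurable (pEta p η) := by
  unfold pEta
  exact (StronglyMeasurable.integral_prod_right'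
    (f := fun q => p q.2 * rexp (-‖q.1 - q.2‖ ^ 2 / (2 * η ^ 2)))
    (by exact ((hpm.comp measurable_snd).mul
      (((measurable_fst.sub measurable_snd).norm.pow_const 2).neg.div_const
        (2 * η ^ 2)).exp).stronglyMeasurable)).measurable





theorem KPCS_eq (L : E → ℝ) (η : ℝ) (x z : E) :
    KPCS L η x z = rexp (L z) * rexp (-‖x - z‖ ^ 2 / (2 * η ^ 2)) / qEta L η x := by
  rw [KPCS, norm_sub_rev z x,
    show L z - ‖x - z‖ ^ 2 / (2 * η ^ 2) = L z + -‖x - z‖ ^ 2 / (2 * η ^ 2) by ring,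
    show L z + -‖x - z‖ ^ 2 / (2 * η ^ 2) = L z + (-‖x - z‖ ^ 2 / (2 * η ^ 2)) from rfl,
    Real.exp_add]

theorem KPCS_nonneg {M : ℝ} (L : E → ℝ) (η : ℝ) (hLm : Measurable L) (hM : ∀ y, L y ≤ M)
    (x z : E) : 0 ≤ KPCS L η x z :=
  div_nonneg (Real.exp_pos _).le (qEta_nonneg L η x)

theorem KPCS_fun_eq (L : E → ℝ) (η : ℝ) (x : E) :
    KPCS L η x = fun z => rexp (L z) * rexp (-‖x - z‖ ^ 2 / (2 * η ^ 2)) / qEta L η x :=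
  funext fun z => KPCS_eq L η x z

theorem KPCS_integrable {L : E → ℝ} {η M : ℝ} (hLm : Measurable L) (hM : ∀ y, L y ≤ M) (hη : 0 < η) (x : E) :
    Integrable (KPCS L η x) := by
  rw [KPCS_fun_eq]
  exact (qEta_integrand_integrable hLm hM hη x).div_const _

theorem KPCS_int {L : E → ℝ} {η M : ℝ} (hLm : Measurable L) (hM : ∀ y, L y ≤ M) (hη : 0 < η) (x : E) :
    ∫ z, KPCS L η x z = 1 := by
  simp_rw [KPCS_eq]
  rw [integral_div]
  have h : (∫ z : E, rexp (L z) * rexp (-‖x - z‖ ^ 2 / (2 * η ^ 2))) = qEta L η x := rfl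
  rw [h]
  exact div_self (qEta_pos hLm hM hη x).ne'

theorem KDDS_eq (p : E → ℝ) (η : ℝ) (z x : E) :
    KDDS p η z x = p x * rexp (-‖z - x‖ ^ 2 / (2 * η ^ 2)) / pEta p η z := by
  rw [KDDS, norm_sub_rev x z]

theorem KDDS_nonneg (p : E → ℝ) (η : ℝ) (hp0 : ∀ x, 0 ≤ p x) (hp1 : ∫ x : E, p x = 1)
    (hpm : Measurable p) (hη : 0 < η) (z x : E) : 0 ≤ KDDS p η z x :=
  div_nonneg (mul_nonneg (hp0 x) (Real.exp_pos _).le) (pEta_pos hp1 hpm hp0 hη z).le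

theorem KDDS_integrable {p : E → ℝ} {η : ℝ} (hp1 : ∫ x : E, p x = 1) (hpm : Measurable p) (hp0 : ∀ x, 0 ≤ p x)
    (hη : 0 < η) (z : E) : Integrable (fun x => KDDS p η z x) := by
  have h : (fun x => KDDS p η z x)
      = fun x => p x * rexp (-‖z - x‖ ^ 2 / (2 * η ^ 2)) / pEta p η z :=
    funext fun x => KDDS_eq p η z x
  rw [h]
  exact (pEta_integrand_integrable hp1 hpm hp0 hη z).div_const _

theorem KDDS_int {p : E → ℝ} {η : ℝ} (hp1 : ∫ x : E, p x = 1) (hpm : Measurable p) (hp0 : ∀ x, 0 ≤ p x)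
    (hη : 0 < η) (z : E) : ∫ x, KDDS p η z x = 1 := by
  simp_rw [KDDS_eq]
  rw [integral_div]
  have h : (∫ x : E, p x * rexp (-‖z - x‖ ^ 2 / (2 * η ^ 2))) = pEta p η z := rfl
  rw [h]
  exact div_self (pEta_pos hp1 hpm hp0 hη z).ne'

theorem Z_integrable {p L : E → ℝ} {η M : ℝ} (hp1 : ∫ x : E, p x = 1) (hpm : Measurable p) (hp0 : ∀ x, 0 ≤ p x)
    (hLm : Measurable L) (hM : ∀ y, L y ≤ M) (hη : 0 < η) :
    Integrable (fun x : E => p x * qEta L η x) := by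
  refine Integrable.mono' (((p_integrable hp1).const_mul (rexp M * gaussC d η)))
    ((hpm.mul (qEta_measurable hLm)).aestronglyMeasurable)
    (Filter.Eventually.of_forall fun x => ?_)
  rw [Real.norm_eq_abs, abs_of_nonneg (mul_nonneg (hp0 x) (qEta_nonneg L η x))]
  calc p x * qEta L η x ≤ p x * (rexp M * gaussC d η) :=
        mul_le_mul_of_nonneg_left (qEta_le hLm hM hη x) (hp0 x)
    _ = rexp M * gaussC d η * p x := by ring

theorem Z_pos {p L : E → ℝ} {η M : ℝ} (hp1 : ∫ x : E, p x = 1) (hpm : Measurable p) (hp0 : ∀ x, 0 ≤ p x)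
    (hLm : Measurable L) (hM : ∀ y, L y ≤ M) (hη : 0 < η) :
    0 < ∫ x : E, p x * qEta L η x := by
  rw [integral_pos_iff_support_of_nonneg
    (fun x => mul_nonneg (hp0 x) (qEta_nonneg L η x))
    (Z_integrable hp1 hpm hp0 hLm hM hη)]
  refine lt_of_lt_of_le (support_p_pos hp1 hp0) (measure_mono fun x hx => ?_)
  simp only [Function.mem_support] at hx ⊢
  exact mul_ne_zero hx (qEta_pos hLm hM hη x).ne'

theorem piEta_int {p L : E → ℝ} {η M : ℝ} (hp1 : ∫ x : E, p x = 1) (hpm : Measurable p) (hp0 : ∀ x, 0 ≤ p x)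
    (hLm : Measurable L) (hM : ∀ y, L y ≤ M) (hη : 0 < η) :
    ∫ x, piEta p L η x = 1 := by
  simp only [piEta]
  rw [integral_div]
  exact div_self (Z_pos hp1 hpm hp0 hLm hM hη).ne'

theorem reversible {p L : E → ℝ} {η M : ℝ} (hp1 : ∫ x : E, p x = 1) (hpm : Measurable p) (hp0 : ∀ x, 0 ≤ p x)
    (hLm : Measurable L) (hM : ∀ y, L y ≤ M) (hη : 0 < η) (x x' : E) :
    piEta p L η x * KDPnP p L η x x' = piEta p L η x' * KDPnP p L η x' x := by
  simp only [KDPnP]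
  rw [← integral_const_mul, ← integral_const_mul]
  refine integral_congr_ae (Filter.Eventually.of_forall fun z => ?_)
  have hqx := (qEta_pos hLm hM hη x).ne'
  have hqx' := (qEta_pos hLm hM hη x').ne'
  have hpz := (pEta_pos hp1 hpm hp0 hη z).ne'
  have hZ := (Z_pos hp1 hpm hp0 hLm hM hη).ne'
  simp only [piEta, KPCS_eq, KDDS]
  rw [norm_sub_rev x' z, norm_sub_rev x z]
  field_simp

theorem KDPnP_markov {p L : E → ℝ} {η M : ℝ} (hp1 : ∫ x : E, p x = 1) (hpm : Measurable p) (hp0 : ∀ x, 0 ≤ p x)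
    (hLm : Measurable L) (hM : ∀ y, L y ≤ M) (hη : 0 < η) (x' : E) :
    ∫ x, KDPnP p L η x' x = 1 := by
  have hmeas : AEStronglyMeasurable
      (Function.uncurry fun z x : E => KPCS L η x' z * KDDS p η z x)
      (volume.prod volume) := by
    refine Measurable.aestronglyMeasurable ?_
    have h1 : Measurable fun q : E × E => KPCS L η x' q.1 :=
      (((hLm.comp measurable_fst).sub
        (((measurable_fst.sub measurable_const).norm.pow_const 2).div_const _)).exp.div_const _)
    have h2 : Measurable fun q : E × E => KDDS p η q.1 q.2 := by
      refine Measurable.div ?_ ((pEta_measurable hpm).comp measurable_fst)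
      exact (hpm.comp measurable_snd).mul
        (((measurable_snd.sub measurable_fst).norm.pow_const 2).neg.div_const _).exp
    exact h1.mul h2
  have hint : Integrable
      (Function.uncurry fun z x : E => KPCS L η x' z * KDDS p η z x)
      (volume.prod volume) := by
    rw [integrable_prod_iff hmeas]
    constructor
    · refine Filter.Eventually.of_forall fun z => ?_
      simp only [Function.uncurry_apply_pair]
      exact (KDDS_integrable hp1 hpm hp0 hη z).const_mul _
    · refine (KPCS_integrable hLm hM hη x').congr
        (Filter.Eventually.of_forall fun z => ?_)
      simp only [Function.uncurry_apply_pair]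
      have hnn : ∀ x : E, ‖KPCS L η x' z * KDDS p η z x‖ = KPCS L η x' z * KDDS p η z x :=
        fun x => by
          rw [Real.norm_eq_abs, abs_of_nonneg (mul_nonneg
            (KPCS_nonneg L η hLm hM x' z) (KDDS_nonneg p η hp0 hp1 hpm hη z x))]
      simp_rw [hnn]
      rw [integral_const_mul, KDDS_int hp1 hpm hp0 hη z, mul_one]
  have hswap := integral_integral_swap hint
  have hstep : ∀ z : E, ∫ x, KPCS L η x' z * KDDS p η z x = KPCS L η x' z := fun z => by
    rw [integral_const_mul, KDDS_int hp1 hpm hp0 hη z, mul_one]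
  calc ∫ x, KDPnP p L η x' x =  ∫ x, ∫ z, KPCS L η x' z * KDDS p η z x := rfl
    _ = ∫ z, ∫ x, KPCS L η x' z * KDDS p η z x := hswap.symm
    _ = ∫ z, KPCS L η x' z := integral_congr_ae (Filter.Eventually.of_forall hstep)
    _ = 1 := KPCS_int hLm hM hη x'

theorem stationary {p L : E → ℝ} {η M : ℝ} (hp1 : ∫ x : E, p x = 1) (hpm : Measurable p) (hp0 : ∀ x, 0 ≤ p x)
    (hLm : Measurable L) (hM : ∀ y, L y ≤ M) (hη : 0 < η) (x' : E) :
    ∫ x, piEta p L η x * KDPnP p L η x x' = piEta p L η x' := by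
  have h : (fun x => piEta p L η x * KDPnP p L η x x')
      = fun x => piEta p L η x' * KDPnP p L η x' x :=
    funext fun x => reversible hp1 hpm hp0 hLm hM hη x x'
  rw [h, integral_const_mul, KDPnP_markov hp1 hpm hp0 hLm hM hη x', mul_one]

end DPnPAux

/-- `π_η(x) = p⋆(x) q̃_η(x) / ∫ p⋆ q̃_η` is a well-defined probability density (the normalizing
integral is finite and positive), `K_DPnP` is reversible with respect to `π_η`, and consequently
`π_η` is a stationary distribution of `K_DPnP`. -/
theorem stmt6 {d : ℕ} (p L : EuclideanSpace ℝ (Fin d) → ℝ)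
    (hpm : Measurable p) (hp0 : ∀ x, 0 ≤ p x) (hp1 : ∫ x, p x = 1)
    (hLm : Measurable L) (hLb : BddAbove (Set.range L))
    (η : ℝ) (hη : 0 < η) :
    Integrable (fun x => p x * qEta L η x)
      ∧ (0 < ∫ x, p x * qEta L η x)
      ∧ (∫ x, piEta p L η x = 1)
      ∧ (∀ x x', piEta p L η x * KDPnP p L η x x' = piEta p L η x' * KDPnP p L η x' x)
      ∧ (∀ x', ∫ x, piEta p L η x * KDPnP p L η x x' = piEta p L η x') := by
  obtain ⟨M, hMub⟩ := hLb
  have hM : ∀ y, L y ≤ M := fun y => hMub ⟨y, rfl⟩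
  exact ⟨DPnPAux.Z_integrable hp1 hpm hp0 hLm hM hη,
    DPnPAux.Z_pos hp1 hpm hp0 hLm hM hη,
    DPnPAux.piEta_int hp1 hpm hp0 hLm hM hη,
    fun x x' => DPnPAux.reversible hp1 hpm hp0 hLm hM hη x x',
    fun x' => DPnPAux.stationary hp1 hpm hp0 hLm hM hη x'⟩
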